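/- Let V₁, …, V_d and W be C¹ vector fields on ℝ^e, let f = (f¹, …, f^d) : [0,T] → ℝ^d be C¹, let y : [0,T] → ℝ^e be a solution of the controlled ODE dy = Σᵢ Vᵢ(y) df^i started at y₀, and let J : [0,T] → L(ℝ^e, ℝ^e) be a differentiable path with J(0) = id satisfying the backward Jacobian equation J′(t) = −J(t) ∘ (Σ_{i=1}^d (f^i)′(t) (DVᵢ)(y(t))). Then for every t ∈ [0,T]: J(t)(W(y(t))) = W(y₀) + ∫₀ᵗ Σ_{i=1}^d (f^i)′(s) · J(s)([Vᵢ, W](y(s))) ds. -/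

import Mathlib

open Set

/-- The Lie bracket of two vector fields on `ℝ^e`:
`[V, W](x) = (DW)(x)(V(x)) − (DV)(x)(W(x))`. -/
noncomputable def lieB {e : ℕ} (V W : (Fin e → ℝ) → (Fin e → ℝ)) (x : Fin e → ℝ) :
    Fin e → ℝ :=
  fderiv ℝ W x (V x) - fderiv ℝ V x (W x)

/-- Along a solution `y` of the controlled ODE `dy = Σᵢ Vᵢ(y) dfⁱ` and a solution `J` of the
backward Jacobian equation with `J(0) = id`, one has
`J(t)(W(y(t))) = W(y₀) + ∫₀ᵗ Σᵢ (fⁱ)′(s) • J(s)([Vᵢ, W](y(s))) ds`. -/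
theorem stmt1 {d e : ℕ} (hd : 1 ≤ d) (he : 1 ≤ e) {T : ℝ} (hT : 0 < T)
    (V : Fin d → (Fin e → ℝ) → (Fin e → ℝ)) (W : (Fin e → ℝ) → (Fin e → ℝ))
    (hV : ∀ i, ContDiff ℝ 1 (V i)) (hW : ContDiff ℝ 1 W)
    (f f' : ℝ → Fin d → ℝ)
    (hf : ∀ t ∈ Icc (0 : ℝ) T, HasDerivWithinAt f (f' t) (Icc 0 T) t)
    (hf' : ContinuousOn f' (Icc 0 T))
    (y₀ : Fin e → ℝ) (y : ℝ → Fin e → ℝ) (hy0 : y 0 = y₀)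
    (hy : ∀ t ∈ Icc (0 : ℝ) T,
      HasDerivWithinAt y (∑ i, f' t i • V i (y t)) (Icc 0 T) t)
    (J : ℝ → (Fin e → ℝ) →L[ℝ] (Fin e → ℝ))
    (hJ0 : J 0 = ContinuousLinearMap.id ℝ (Fin e → ℝ))
    (hJ : ∀ t ∈ Icc (0 : ℝ) T,
      HasDerivWithinAt J (-(J t).comp (∑ i, f' t i • fderiv ℝ (V i) (y t))) (Icc 0 T) t) :
    ∀ t ∈ Icc (0 : ℝ) T,
      J t (W (y t)) = W y₀ + ∫ s in (0 : ℝ)..t, ∑ i, f' s i • J s (lieB (V i) W (y s)) := by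
  intro t ht
  set g : ℝ → Fin e → ℝ := fun s => J s (W (y s)) with hg
  set g' : ℝ → Fin e → ℝ := fun s => ∑ i, f' s i • J s (lieB (V i) W (y s)) with hg'
  have hWd : Differentiable ℝ W := hW.differentiable one_ne_zero
  have hderiv : ∀ s ∈ Icc (0:ℝ) T, HasDerivWithinAt g (g' s) (Icc 0 T) s := by
    intro s hs
    have hWy : HasDerivWithinAt (fun u => W (y u))
        (fderiv ℝ W (y s) (∑ i, f' s i • V i (y s))) (Icc 0 T) s :=
      (hWd (y s)).hasFDerivAt.comp_hasDerivWithinAt s (hy s hs)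
    have h := (hJ s hs).clm_apply hWy
    refine h.congr_deriv ?_
    simp only [hg', lieB, map_sum, map_smul, map_sub,
      ContinuousLinearMap.neg_apply, ContinuousLinearMap.comp_apply,
      ContinuousLinearMap.coe_sum', ContinuousLinearMap.coe_smul',
      Finset.sum_apply, Pi.smul_apply, smul_sub, Finset.sum_sub_distrib]
    abel
  -- continuity of g'
  have hJc : ContinuousOn J (Icc (0:ℝ) T) := fun s hs => (hJ s hs).continuousWithinAt
  have hyc : ContinuousOn y (Icc (0:ℝ) T) := fun s hs => (hy s hs).continuousWithinAt
  have hlie : ∀ i, Continuous (lieB (V i) W) := by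
    intro i
    unfold lieB
    exact ((hW.continuous_fderiv one_ne_zero).clm_apply (hV i).continuous).sub
      (((hV i).continuous_fderiv one_ne_zero).clm_apply hW.continuous)
  have hg'c : ContinuousOn g' (Icc (0:ℝ) T) := by
    apply continuousOn_finset_sum
    intro i _
    exact ((continuous_apply i).comp_continuousOn hf').smul
      (hJc.clm_apply ((hlie i).comp_continuousOn hyc))
  have hsub : Icc (0:ℝ) t ⊆ Icc 0 T := Icc_subset_Icc le_rfl ht.2
  have key : ∫ s in (0:ℝ)..t, g' s = g t - g 0 := by
    apply intervalIntegral.integral_eq_sub_of_hasDeriv_right_of_le ht.1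
    · exact fun s hs => ((hderiv s (hsub hs)).continuousWithinAt).mono hsub
    · intro x hx
      have hx' : Icc (0:ℝ) T ∈ nhds x :=
        Icc_mem_nhds hx.1 (lt_of_lt_of_le hx.2 ht.2)
      exact ((hderiv x ⟨le_of_lt hx.1, le_of_lt (lt_of_lt_of_le hx.2 ht.2)⟩).hasDerivAt
        hx').hasDerivWithinAt
    · exact (hg'c.mono (by rw [uIcc_of_le ht.1]; exact hsub)).intervalIntegrable
  have hg0 : g 0 = W y₀ := by simp [hg, hJ0, hy0]
  have := key
  rw [hg0] at this
  have : g t = W y₀ + ∫ s in (0:ℝ)..t, g' s := by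
    rw [this]; abel
  simpa [hg, hg'] using this
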